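/- Let q = 2^s and let ũ_n be the product over the upper triangular unipotent subgroup of GL_n(F_q) of the orbit of the variables, equivalently ũ_n = det(M) where M is the n×n matrix with (i,j) entry x_j^{q^{i-1}}. Then for 0 < k < q^{n-1}, the Steenrod operation P^k(ũ_n) = 0. -/

import Mathlib

open MvPolynomial

/-- The complete Steenrod operator `P(t)`, the algebra homomorphism determined
by `v ↦ v + v^q t` on degree-one elements. -/
noncomputable def stP (q : ℕ) (σ : Type*) (F : Type*) [Field F] :
    MvPolynomial σ F →ₐ[F] Polynomial (MvPolynomial σ F) :=
  MvPolynomial.aeval fun i =>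
    Polynomial.C (MvPolynomial.X i) + Polynomial.C (MvPolynomial.X i ^ q) * Polynomial.X

/-- The Moore determinant `ũ_n = det (x_j^{q^{i-1}})_{1 ≤ i,j ≤ n}`. -/
noncomputable def uTilde (q n : ℕ) (F : Type*) [Field F] : MvPolynomial (Fin n) F :=
  (Matrix.of fun i j : Fin n => (X j : MvPolynomial (Fin n) F) ^ q ^ (i : ℕ)).det

lemma charF {F : Type*} [Field F] [Fintype F] (s q : ℕ)
    (hq : q = 2 ^ s) (hF : Fintype.card F = q) : CharP F 2 := by
  set p := ringChar F with hp
  haveI hc : CharP F p := ringChar.charP F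
  have hpp : p.Prime := CharP.char_is_prime F p
  obtain ⟨m, _, hm⟩ := FiniteField.card F p
  have h2 : p = 2 := by
    have h2 : p ∣ 2 ^ s := by
      rw [← hq, ← hF, hm]
      exact dvd_pow_self p m.2.ne'
    exact (Nat.prime_dvd_prime_iff_eq hpp Nat.prime_two).mp (hpp.dvd_of_dvd_pow h2)
  rw [h2] at hc; exact hc

/-- For `0 < k < q^{n-1}` the Steenrod operation `P^k(ũ_n) = 0`. -/
theorem stmt_5 {F : Type*} [Field F] [Fintype F] (s n q : ℕ) (hs : 1 ≤ s)
    (hq : q = 2 ^ s) (hF : Fintype.card F = q) (k : ℕ) (hk0 : 0 < k)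
    (hk : k < q ^ (n - 1)) :
    ((stP q (Fin n) F) (uTilde q n F)).coeff k = 0 := by
  classical
  haveI : CharP F 2 := charF s q hq hF
  haveI : Fact (Nat.Prime 2) := ⟨Nat.prime_two⟩
  have hq2 : 1 < q := by
    rw [hq]; exact Nat.one_lt_two_pow (by omega)
  set R := MvPolynomial (Fin n) F with hR
  -- entrywise action of stP
  have hentry : ∀ i j : Fin n, stP q (Fin n) F ((X j : R) ^ q ^ (i : ℕ)) =
      Polynomial.C ((X j : R) ^ q ^ (i : ℕ)) +
        Polynomial.C ((X j : R) ^ q ^ ((i : ℕ) + 1)) * Polynomial.X ^ q ^ (i : ℕ) := by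
    intro i j
    have hx : stP q (Fin n) F (X j) =
        Polynomial.C (X j : R) + Polynomial.C ((X j : R) ^ q) * Polynomial.X := by
      simp [stP]
    have hqpow : q ^ (i : ℕ) = 2 ^ (s * (i : ℕ)) := by rw [hq, ← pow_mul]
    rw [map_pow, hx, hqpow, add_pow_char_pow, ← hqpow, mul_pow, ← Polynomial.C_pow,
      ← Polynomial.C_pow, ← pow_mul, ← pow_succ']
  -- stP of the Moore determinant
  set P : Matrix (Fin n) (Fin n) (Polynomial R) :=
    Matrix.of fun i j => Polynomial.C ((X j : R) ^ q ^ (i : ℕ)) with hP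
  set Q : Matrix (Fin n) (Fin n) (Polynomial R) :=
    Matrix.of fun i j =>
      Polynomial.C ((X j : R) ^ q ^ ((i : ℕ) + 1)) * Polynomial.X ^ q ^ (i : ℕ) with hQ
  have hdet : stP q (Fin n) F (uTilde q n F) = Matrix.det (Q + P) := by
    rw [uTilde, AlgHom.map_det]
    congr 1
    refine Matrix.ext fun i j => ?_
    simp only [AlgHom.mapMatrix_apply, Matrix.map_apply, Matrix.of_apply, Matrix.add_apply,
      hP, hQ]
    rw [hentry i j]
    exact add_comm _ _
  -- multilinear expansion over subsets of rows
  set MS : Finset (Fin n) → Matrix (Fin n) (Fin n) R := fun S =>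
    Matrix.of fun i j => (X j : R) ^ q ^ (if i ∈ S then (i : ℕ) + 1 else (i : ℕ)) with hMS
  have hexp : Matrix.det (Q + P) =
      ∑ S : Finset (Fin n),
        Polynomial.C ((MS S).det) * (Polynomial.X : Polynomial R) ^ (∑ i ∈ S, q ^ (i : ℕ)) := by
    have h1 : Matrix.det (Q + P) =
        ∑ S : Finset (Fin n), Matrix.det (S.piecewise Q P) :=
      (Matrix.detRowAlternating :
        (Fin n → Polynomial R) [⋀^Fin n]→ₗ[Polynomial R] Polynomial R
        ).toMultilinearMap.map_add_univ Q P
    rw [h1]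
    refine Finset.sum_congr rfl fun S _ => ?_
    have h2 : (S.piecewise Q P : Matrix (Fin n) (Fin n) (Polynomial R)) =
        fun i => (if i ∈ S then (Polynomial.X : Polynomial R) ^ q ^ (i : ℕ) else 1) •
          fun j => Polynomial.C ((MS S) i j) := by
      funext i j
      by_cases h : i ∈ S <;>
        simp [Finset.piecewise, h, hQ, hP, hMS, smul_eq_mul, mul_comm]
    have h3 := (Matrix.detRowAlternating :
        (Fin n → Polynomial R) [⋀^Fin n]→ₗ[Polynomial R] Polynomial R
        ).toMultilinearMap.map_smul_univ
        (fun i => if i ∈ S then (Polynomial.X : Polynomial R) ^ q ^ (i : ℕ) else 1)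
        (fun i j => Polynomial.C ((MS S) i j))
    have h4 : Matrix.det (S.piecewise Q P) =
        (∏ i : Fin n, if i ∈ S then (Polynomial.X : Polynomial R) ^ q ^ (i : ℕ) else 1) *
          Matrix.det ((MS S).map Polynomial.C) := by
      rw [h2]; exact h3
    have h5 : ((MS S).map (Polynomial.C : R →+* Polynomial R)).det
        = Polynomial.C ((MS S).det) := by
      rw [RingHom.map_det]; rfl
    rw [h4, h5, Finset.prod_ite_mem, Finset.univ_inter,
      Finset.prod_pow_eq_pow_sum, mul_comm]
  rw [hdet, hexp, Polynomial.finset_sum_coeff]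
  refine Finset.sum_eq_zero fun S _ => ?_
  rw [Polynomial.coeff_C_mul, Polynomial.coeff_X_pow]
  by_cases he : k = ∑ i ∈ S, q ^ (i : ℕ)
  · -- the determinant vanishes: two equal rows
    have hSne : S.Nonempty := by
      rcases S.eq_empty_or_nonempty with h | h
      · rw [h] at he; simp at he; omega
      · exact h
    set i := S.max' hSne with hi
    have hiS : i ∈ S := S.max'_mem hSne
    have hile : q ^ (i : ℕ) ≤ k := by
      rw [he]
      exact Finset.single_le_sum (f := fun j : Fin n => q ^ (j : ℕ))
        (fun _ _ => Nat.zero_le _) hiS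
    have hilt : (i : ℕ) < n - 1 :=
      (Nat.pow_lt_pow_iff_right hq2).mp (lt_of_le_of_lt hile hk)
    have hin : (i : ℕ) + 1 < n := by have := i.2; omega
    set i' : Fin n := ⟨(i : ℕ) + 1, hin⟩ with hi'
    have hne : i ≠ i' := by
      intro h
      have : (i : ℕ) = (i : ℕ) + 1 := congrArg Fin.val h
      omega
    have hi'S : i' ∉ S := by
      intro h
      have := S.le_max' i' h
      rw [← hi] at this
      have : (i' : ℕ) ≤ (i : ℕ) := this
      simp [hi'] at this
    have hrow : (MS S) i = (MS S) i' := by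
      funext j
      simp [hMS, hiS, hi'S, hi', show (⟨(i : ℕ) + 1, hin⟩ : Fin n) ∉ S from hi'S]
    rw [Matrix.det_zero_of_row_eq hne hrow]
    simp
  · simp [he]
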